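/- Let F₁, F₂ be involutions on S and π a strictly positive density. Define α₁(x) = min(1, π(F₁(x))/π(x)) and, on the set where α₁(x) < 1 and α₁(F₂(x)) < 1, define α₂(x) = min(1, (π(F₂(x))/π(x)) · (1 − α₁(F₂(x)))/(1 − α₁(x))). Then α₂ satisfies the second-stage balance condition π(x)·(1 − α₁(x))·α₂(x) = π(F₂(x))·(1 − α₁(F₂(x)))·α₂(F₂(x)) for all such x. -/
import Mathlib


/-- Second-stage delayed rejection balance condition for DR-G-HMC. -/
theorem delayed_rejection_second_stage_balance {S : Type*}
    (F₁ F₂ : S → S) (hF₁ : F₁ ∘ F₁ = id) (hF₂ : F₂ ∘ F₂ = id)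
    (π : S → ℝ) (hπ : ∀ x, 0 < π x)
    (α₁ : S → ℝ) (hα₁ : ∀ x, α₁ x = min 1 (π (F₁ x) / π x))
    (α₂ : S → ℝ)
    (hα₂ : ∀ x, α₂ x = min 1 ((π (F₂ x) / π x) * ((1 - α₁ (F₂ x)) / (1 - α₁ x))))
    (x : S) (hx₁ : α₁ x < 1) (hx₂ : α₁ (F₂ x) < 1) :
    π x * (1 - α₁ x) * α₂ x = π (F₂ x) * (1 - α₁ (F₂ x)) * α₂ (F₂ x) := by
  have hFF : F₂ (F₂ x) = x := congrFun hF₂ x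
  set a : ℝ := π x * (1 - α₁ x) with ha
  set b : ℝ := π (F₂ x) * (1 - α₁ (F₂ x)) with hb
  have hapos : 0 < a := mul_pos (hπ x) (by linarith)
  have hbpos : 0 < b := mul_pos (hπ (F₂ x)) (by linarith)
  have h1 : α₂ x = min 1 (b / a) := by
    rw [hα₂ x, ha, hb]
    congr 1
    field_simp
  have h2 : α₂ (F₂ x) = min 1 (a / b) := by
    rw [hα₂ (F₂ x), hFF, ha, hb]
    congr 1
    field_simp
  rw [h1, h2, mul_min_of_nonneg _ _ hapos.le, mul_min_of_nonneg _ _ hbpos.le,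
    mul_div_cancel₀ _ hapos.ne', mul_div_cancel₀ _ hbpos.ne', mul_one, mul_one,
    min_comm]
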